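/- Let G = (V, E, ends) be a multigraph. Every extreme point x of the score vector polytope P_G is the vector of a weak parking function: there exists a weak parking function f of G such that x_v = f(v) for all v ∈ V (in particular every extreme point of P_G has nonnegative integer coordinates). -/

import Mathlib

open Finset

/-- The degree `κ_S` of a subset `S` of vertices of a multigraph `(V, E, ends)`. -/
def multigraphKappa {V E : Type*} [Fintype E] [DecidableEq V]
    (ends : E → Sym2 V) (S : Finset V) : ℕ :=
  (Finset.univ.filter fun e => ∃ v ∈ S, v ∈ ends e).card

/-- The score vector polytope of a multigraph. -/
def scorePolytope {V E : Type*} [Fintype E] [DecidableEq V]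
    (ends : E → Sym2 V) : Set (V → ℝ) :=
  {x | (∀ v : V, 0 ≤ x v) ∧
    ∀ S : Finset V, ∑ v ∈ S, x v ≤ (multigraphKappa ends S : ℝ)}

/-- `d̂_S(v)`: the number of edges joining `v` to `(V ∖ S) ∪ {v}`
(loops at `v` counted once each). -/
def dhat {V E : Type*} [Fintype V] [Fintype E] [DecidableEq V]
    (ends : E → Sym2 V) (S : Finset V) (v : V) : ℕ :=
  (Finset.univ.filter fun e : E => ∃ u : V, ends e = s(v, u) ∧ (u = v ∨ u ∉ S)).card

/-- A weak parking function of a multigraph: for every nonempty `S ⊆ V` there is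
`v ∈ S` with `f v ≤ d̂_S(v)`. -/
def IsWeakParkingFunction {V E : Type*} [Fintype V] [Fintype E] [DecidableEq V]
    (ends : E → Sym2 V) (f : V → ℕ) : Prop :=
  ∀ S : Finset V, S.Nonempty → ∃ v ∈ S, f v ≤ dhat ends S v

section aux
variable {V E : Type*} [Fintype E] [DecidableEq V] (ends : E → Sym2 V)

lemma kappa_empty : multigraphKappa ends (∅ : Finset V) = 0 := by
  simp [multigraphKappa]

lemma kappa_submod (A B : Finset V) :
    multigraphKappa ends (A ∪ B) + multigraphKappa ends (A ∩ B)
      ≤ multigraphKappa ends A + multigraphKappa ends B := by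
  classical
  unfold multigraphKappa
  have h1 : (Finset.univ.filter fun e : E => ∃ v ∈ A ∪ B, v ∈ ends e)
      = (Finset.univ.filter fun e => ∃ v ∈ A, v ∈ ends e)
        ∪ (Finset.univ.filter fun e => ∃ v ∈ B, v ∈ ends e) := by
    ext e; simp only [mem_filter, mem_union, mem_univ, true_and]
    constructor
    · rintro ⟨v, h | h, hve⟩
      · exact Or.inl ⟨v, h, hve⟩
      · exact Or.inr ⟨v, h, hve⟩
    · rintro (⟨v, h, hve⟩ | ⟨v, h, hve⟩)
      · exact ⟨v, Or.inl h, hve⟩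
      · exact ⟨v, Or.inr h, hve⟩
  have h2 : (Finset.univ.filter fun e : E => ∃ v ∈ A ∩ B, v ∈ ends e)
      ⊆ (Finset.univ.filter fun e => ∃ v ∈ A, v ∈ ends e)
        ∩ (Finset.univ.filter fun e => ∃ v ∈ B, v ∈ ends e) := by
    intro e he
    simp only [mem_filter, mem_inter, mem_univ, true_and] at he ⊢
    obtain ⟨v, ⟨h1, h2⟩, hve⟩ := he
    exact ⟨⟨v, h1, hve⟩, ⟨v, h2, hve⟩⟩
  calc (Finset.univ.filter fun e : E => ∃ v ∈ A ∪ B, v ∈ ends e).card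
        + (Finset.univ.filter fun e : E => ∃ v ∈ A ∩ B, v ∈ ends e).card
      ≤ ((Finset.univ.filter fun e : E => ∃ v ∈ A, v ∈ ends e)
          ∪ (Finset.univ.filter fun e => ∃ v ∈ B, v ∈ ends e)).card
        + ((Finset.univ.filter fun e : E => ∃ v ∈ A, v ∈ ends e)
          ∩ (Finset.univ.filter fun e => ∃ v ∈ B, v ∈ ends e)).card := by
        rw [h1]; exact Nat.add_le_add_left (card_le_card h2) _
    _ = _ := card_union_add_card_inter _ _

lemma kappa_insert_le [Fintype V] (S T' : Finset V) (v : V) (hv : v ∉ T')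
    (hS : ∀ u ∈ S, u ≠ v → u ∈ T') :
    multigraphKappa ends (insert v T') ≤ multigraphKappa ends T' + dhat ends S v := by
  classical
  unfold multigraphKappa dhat
  have h1 : (Finset.univ.filter fun e : E => ∃ w ∈ insert v T', w ∈ ends e)
      ⊆ (Finset.univ.filter fun e => ∃ w ∈ T', w ∈ ends e)
        ∪ (Finset.univ.filter fun e : E => ∃ u : V, ends e = s(v, u) ∧ (u = v ∨ u ∉ S)) := by
    intro e he
    simp only [mem_filter, mem_union, mem_univ, true_and] at he ⊢
    obtain ⟨w, hw, hwe⟩ := he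
    by_cases hT : ∃ w ∈ T', w ∈ ends e
    · exact Or.inl hT
    · push_neg at hT
      rcases mem_insert.mp hw with hwv | hwT'
      · rw [hwv] at hwe
        obtain ⟨u, hu⟩ := Sym2.mem_iff_exists.mp hwe
        refine Or.inr ⟨u, hu, ?_⟩
        by_cases huv : u = v
        · exact Or.inl huv
        · right
          intro huS
          have : u ∈ T' := hS u huS huv
          exact hT u this (hu ▸ Sym2.mem_mk_right _ _)
      · exact absurd hwe (hT w hwT')
  calc _ ≤ ((Finset.univ.filter fun e : E => ∃ w ∈ T', w ∈ ends e)
        ∪ (Finset.univ.filter fun e : E => ∃ u : V, ends e = s(v, u) ∧ (u = v ∨ u ∉ S))).card :=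
      card_le_card h1
    _ ≤ _ := card_union_le _ _

end aux

/-- Every extreme point of the score vector polytope is the vector of a weak
parking function (in particular it has nonnegative integer coordinates). -/
theorem extremePoint_scorePolytope_is_weakParkingVector
    {V E : Type*} [Fintype V] [Fintype E] [DecidableEq V]
    (ends : E → Sym2 V) (x : V → ℝ)
    (hx : x ∈ Set.extremePoints ℝ (scorePolytope ends)) :
    ∃ f : V → ℕ, IsWeakParkingFunction ends f ∧ ∀ v : V, x v = (f v : ℝ) := by
  classical
  obtain ⟨hxP, hext⟩ := hx
  obtain ⟨hx0, hxκ⟩ := hxP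
  set Tight : Finset V → Prop :=
    fun A => ∑ w ∈ A, x w = (multigraphKappa ends A : ℝ) with hTight
  -- Key perturbation lemma
  have key : ∀ d : V → ℝ, (∀ v, x v = 0 → d v = 0) →
      (∀ A : Finset V, Tight A → ∑ w ∈ A, d w = 0) → d = 0 := by
    intro d hd0 hdT
    set F : Finset ℝ :=
      insert 1 ((Finset.univ.image fun v : V => if x v = 0 ∨ d v = 0 then 1 else x v / |d v|)
        ∪ (Finset.univ.image fun A : Finset V =>
            if ∑ w ∈ A, d w = 0 then 1
            else ((multigraphKappa ends A : ℝ) - ∑ w ∈ A, x w) / |∑ w ∈ A, d w|)) with hF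
    have hFne : F.Nonempty := ⟨1, mem_insert_self _ _⟩
    set ε := F.min' hFne with hεdef
    have hεpos : 0 < ε := by
      rw [hεdef, Finset.lt_min'_iff]
      intro y hy
      rw [hF] at hy
      rcases mem_insert.mp hy with rfl | hy
      · norm_num
      rcases mem_union.mp hy with hy | hy
      · obtain ⟨v, -, rfl⟩ := mem_image.mp hy
        split_ifs with h
        · norm_num
        · push_neg at h
          exact div_pos (lt_of_le_of_ne (hx0 v) (Ne.symm h.1)) (abs_pos.mpr h.2)
      · obtain ⟨A, -, rfl⟩ := mem_image.mp hy
        split_ifs with h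
        · norm_num
        · have hne : ¬ Tight A := fun hT => h (hdT A hT)
          simp only [hTight] at hne
          have hlt : ∑ w ∈ A, x w < (multigraphKappa ends A : ℝ) :=
            lt_of_le_of_ne (hxκ A) hne
          exact div_pos (by linarith) (abs_pos.mpr h)
    have hmem : ∀ c : ℝ, |c| ≤ ε → (x + c • d) ∈ scorePolytope ends := by
      intro c hc
      constructor
      · intro v
        by_cases h : x v = 0 ∨ d v = 0
        · rcases h with h | h
          · simp [Pi.add_apply, hd0 v h, h]
          · simp only [Pi.add_apply, Pi.smul_apply, smul_eq_mul, h, mul_zero, add_zero]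
            exact hx0 v
        · push_neg at h
          have h1 : ε ≤ x v / |d v| := by
            apply Finset.min'_le
            rw [hF]
            refine mem_insert_of_mem (mem_union_left _ (mem_image.mpr ⟨v, mem_univ v, ?_⟩))
            rw [if_neg (by push_neg; exact h)]
          have h2 : |c * d v| ≤ x v := by
            rw [abs_mul]
            calc |c| * |d v| ≤ (x v / |d v|) * |d v| :=
                  mul_le_mul_of_nonneg_right (hc.trans h1) (abs_nonneg _)
              _ = x v := div_mul_cancel₀ _ (abs_ne_zero.mpr h.2)
          have h3 := neg_abs_le (c * d v)
          simp only [Pi.add_apply, Pi.smul_apply, smul_eq_mul]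
          linarith
      · intro A
        have hsum : ∑ w ∈ A, (x + c • d) w = ∑ w ∈ A, x w + c * ∑ w ∈ A, d w := by
          simp only [Pi.add_apply, Pi.smul_apply, smul_eq_mul, Finset.sum_add_distrib,
            Finset.mul_sum]
        rw [hsum]
        by_cases h : ∑ w ∈ A, d w = 0
        · rw [h, mul_zero, add_zero]; exact hxκ A
        · have h1 : ε ≤ ((multigraphKappa ends A : ℝ) - ∑ w ∈ A, x w) / |∑ w ∈ A, d w| := by
            apply Finset.min'_le
            rw [hF]
            refine mem_insert_of_mem (mem_union_right _ (mem_image.mpr ⟨A, mem_univ A, ?_⟩))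
            rw [if_neg h]
          have h2 : c * ∑ w ∈ A, d w ≤ |c| * |∑ w ∈ A, d w| := by
            calc c * ∑ w ∈ A, d w ≤ |c * ∑ w ∈ A, d w| := le_abs_self _
              _ = |c| * |∑ w ∈ A, d w| := abs_mul _ _
          have h3 : |c| * |∑ w ∈ A, d w|
              ≤ (multigraphKappa ends A : ℝ) - ∑ w ∈ A, x w := by
            calc |c| * |∑ w ∈ A, d w|
                ≤ (((multigraphKappa ends A : ℝ) - ∑ w ∈ A, x w) / |∑ w ∈ A, d w|)
                    * |∑ w ∈ A, d w| :=
                  mul_le_mul_of_nonneg_right (hc.trans h1) (abs_nonneg _)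
              _ = _ := div_mul_cancel₀ _ (abs_ne_zero.mpr h)
          linarith
    have hm1 := hmem ε (by rw [abs_of_pos hεpos])
    have hm2 := hmem (-ε) (by rw [abs_neg, abs_of_pos hεpos])
    have hseg : x ∈ openSegment ℝ (x + (-ε) • d) (x + ε • d) :=
      ⟨1/2, 1/2, by norm_num, by norm_num, by norm_num, by module⟩
    have heq := (hext hm2 hm1 hseg)
    have hz : (-ε) • d = 0 := add_eq_left.mp heq
    rcases smul_eq_zero.mp hz with h | h
    · exact absurd h (neg_ne_zero.mpr (ne_of_gt hεpos))
    · exact h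
  -- Tight set basics
  have tight_empty : Tight ∅ := by
    simp only [hTight]; simp [kappa_empty]
  have tight_ui : ∀ A B : Finset V, Tight A → Tight B → Tight (A ∪ B) ∧ Tight (A ∩ B) := by
    intro A B hA hB
    have hsub := kappa_submod ends A B
    have hsum : ∑ w ∈ A ∪ B, x w + ∑ w ∈ A ∩ B, x w = ∑ w ∈ A, x w + ∑ w ∈ B, x w :=
      Finset.sum_union_inter
    have h1 := hxκ (A ∪ B)
    have h2 := hxκ (A ∩ B)
    simp only [hTight] at hA hB ⊢
    have hcast : (multigraphKappa ends (A ∪ B) : ℝ) + (multigraphKappa ends (A ∩ B) : ℝ)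
        ≤ (multigraphKappa ends A : ℝ) + (multigraphKappa ends B : ℝ) := by
      exact_mod_cast hsub
    constructor <;> linarith
  -- every positive vertex lies in a tight set
  have hpos_mem : ∀ v, 0 < x v → ∃ A : Finset V, Tight A ∧ v ∈ A := by
    intro v hv
    by_contra hcon
    push_neg at hcon
    have hd := key (Pi.single v 1) ?_ ?_
    · have := congrFun hd v
      simp [Pi.single_eq_same] at this
    · intro w hw
      have hne : w ≠ v := fun h => by rw [h] at hw; linarith
      exact Pi.single_eq_of_ne hne 1
    · intro A hA
      have hvA : v ∉ A := hcon A hA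
      rw [Finset.sum_pi_single', if_neg hvA]
  -- minimal tight sets
  have hAvex : ∀ v, 0 < x v → ∃ A : Finset V, (Tight A ∧ v ∈ A) ∧
      ∀ B : Finset V, Tight B → v ∈ B → A ⊆ B := by
    intro v hv
    obtain ⟨A0, hA0, hvA0⟩ := hpos_mem v hv
    set t : Finset (Finset V) := Finset.univ.filter fun A => Tight A ∧ v ∈ A with ht
    have htne : t.Nonempty := ⟨A0, mem_filter.mpr ⟨mem_univ _, hA0, hvA0⟩⟩
    refine ⟨t.inf' htne id, ?_, ?_⟩
    · refine Finset.inf'_mem {A : Finset V | Tight A ∧ v ∈ A} ?_ t htne id ?_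
      · intro a ha b hb
        simp only [Set.mem_setOf_eq] at ha hb ⊢
        constructor
        · have := (tight_ui a b ha.1 hb.1).2
          simpa [Finset.inf_eq_inter] using this
        · simp only [Finset.inf_eq_inter, mem_inter]
          exact ⟨ha.2, hb.2⟩
      · intro A hA
        exact (mem_filter.mp hA).2
    · intro B hB hvB
      have hBt : B ∈ t := mem_filter.mpr ⟨mem_univ _, hB, hvB⟩
      have := Finset.inf'_le (s := t) id hBt
      exact Finset.le_iff_subset.mp this
  choose Av hAv1 hAv2 using hAvex
  -- strict containment
  have hstrict : ∀ v (hv : 0 < x v) (w : V) (hw : 0 < x w), v ≠ w → v ∈ Av w hw →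
      (Av v hv).card < (Av w hw).card := by
    intro v hv w hw hvw hmem'
    have hsub : Av v hv ⊆ Av w hw := hAv2 v hv _ (hAv1 w hw).1 hmem'
    refine card_lt_card (ssubset_of_subset_of_ne hsub ?_)
    intro heq
    have hd := key (Pi.single v 1 - Pi.single w 1) ?_ ?_
    · have := congrFun hd v
      simp [Pi.single_eq_same, Pi.single_eq_of_ne hvw] at this
    · intro u hu
      have h1 : u ≠ v := fun h => by rw [h] at hu; linarith
      have h2 : u ≠ w := fun h => by rw [h] at hu; linarith
      simp [Pi.single_eq_of_ne h1, Pi.single_eq_of_ne h2]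
    · intro A hA
      have hiff : v ∈ A ↔ w ∈ A := by
        constructor
        · intro hvA
          have hss : Av v hv ⊆ A := hAv2 v hv A hA hvA
          have hw' : w ∈ Av v hv := by rw [heq]; exact (hAv1 w hw).2
          exact hss hw'
        · intro hwA
          have hss : Av w hw ⊆ A := hAv2 w hw A hA hwA
          exact hss hmem'
      simp only [Pi.sub_apply, Finset.sum_sub_distrib, Finset.sum_pi_single']
      by_cases hvA : v ∈ A
      · rw [if_pos hvA, if_pos (hiff.mp hvA), sub_self]
      · rw [if_neg hvA, if_neg (fun h => hvA (hiff.mpr h)), sub_self]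
  -- integrality
  have hint : ∀ n (v : V) (hv : 0 < x v), (Av v hv).card ≤ n → ∃ m : ℕ, x v = m := by
    intro n
    induction n with
    | zero =>
      intro v hv hc
      have := card_pos.mpr ⟨v, (hAv1 v hv).2⟩
      omega
    | succ n ih =>
      intro v hv hc
      have hvA : v ∈ Av v hv := (hAv1 v hv).2
      have htA : Tight (Av v hv) := (hAv1 v hv).1
      have hterm : ∀ w : V, ∃ m : ℕ, w ∈ (Av v hv).erase v → x w = m := by
        intro w
        by_cases hw : w ∈ (Av v hv).erase v
        · obtain ⟨hwv, hwA⟩ := mem_erase.mp hw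
          by_cases hxw : 0 < x w
          · obtain ⟨m, hm⟩ := ih w hxw (by
              have := hstrict w hxw v hv hwv hwA
              omega)
            exact ⟨m, fun _ => hm⟩
          · refine ⟨0, fun _ => ?_⟩
            have h1 := hx0 w
            push_neg at hxw
            simpa using le_antisymm hxw h1
        · exact ⟨0, fun h => absurd h hw⟩
      choose g hg using hterm
      have hsum : ∑ w ∈ (Av v hv).erase v, x w = ((∑ w ∈ (Av v hv).erase v, g w : ℕ) : ℝ) := by
        push_cast
        exact Finset.sum_congr rfl fun w hw => hg w hw
      have hsplit : x v + ∑ w ∈ (Av v hv).erase v, x w = ∑ w ∈ Av v hv, x w :=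
        Finset.add_sum_erase _ _ hvA
      simp only [hTight] at htA
      set M := ∑ w ∈ (Av v hv).erase v, g w with hM
      set K := multigraphKappa ends (Av v hv) with hK
      have hxv : x v = (K : ℝ) - (M : ℝ) := by
        rw [← htA, ← hsplit, hsum]; ring
      have hMK : M ≤ K := by
        have h0 := hx0 v
        rw [hxv] at h0
        have h1 : (M : ℝ) ≤ (K : ℝ) := by linarith
        exact_mod_cast h1
      exact ⟨K - M, by rw [hxv]; push_cast [Nat.cast_sub hMK]; ring⟩
  have hnat : ∀ v, ∃ m : ℕ, x v = m := by
    intro v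
    rcases eq_or_lt_of_le (hx0 v) with h | h
    · exact ⟨0, by simp [← h]⟩
    · exact hint (Av v h).card v h le_rfl
  choose f hf using hnat
  refine ⟨f, ?_, hf⟩
  intro S hS
  by_cases hz : ∃ v ∈ S, x v = 0
  · obtain ⟨v, hvS, hv0⟩ := hz
    refine ⟨v, hvS, ?_⟩
    have h1 : (f v : ℝ) = 0 := by rw [← hf v, hv0]
    have h2 : f v = 0 := Nat.cast_eq_zero.mp h1
    omega
  · push_neg at hz
    have hposS : ∀ v ∈ S, 0 < x v := fun v hv => lt_of_le_of_ne (hx0 v) (Ne.symm (hz v hv))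
    set g2 : V → ℕ := fun w => if h : 0 < x w then (Av w h).card else 0 with hg2
    obtain ⟨v, hvS, hvmax⟩ := S.exists_max_image g2 hS
    have hv : 0 < x v := hposS v hvS
    refine ⟨v, hvS, ?_⟩
    have hnotmem : ∀ w (hw : 0 < x w), w ∈ S → w ≠ v → v ∉ Av w hw := by
      intro w hw hwS hwv hmem'
      have hlt := hstrict v hv w hw (Ne.symm hwv) hmem'
      have h1 : g2 v = (Av v hv).card := dif_pos hv
      have h2 : g2 w = (Av w hw).card := dif_pos hw
      have h3 := hvmax w hwS
      omega
    set gA : V → Finset V := fun w => if h : 0 < x w then Av w h else ∅ with hgA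
    set T' : Finset V := (S.erase v).sup gA with hT'def
    have hTT' : Tight T' := by
      refine Finset.sup_induction tight_empty (fun a ha b hb => (tight_ui a b ha hb).1) ?_
      intro w hw
      have hw' : 0 < x w := hposS w (mem_of_mem_erase hw)
      simp only [hgA]
      rw [dif_pos hw']
      exact (hAv1 w hw').1
    have hvT' : v ∉ T' := by
      intro hmem'
      rw [hT'def] at hmem'
      obtain ⟨w, hw, hvw⟩ := Finset.mem_sup.mp hmem'
      obtain ⟨hwv, hwS⟩ := mem_erase.mp hw
      have hw' : 0 < x w := hposS w hwS
      simp only [hgA] at hvw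
      rw [dif_pos hw'] at hvw
      exact hnotmem w hw' hwS hwv hvw
    have hST' : ∀ u ∈ S, u ≠ v → u ∈ T' := by
      intro u huS huv
      have hu : 0 < x u := hposS u huS
      have hmm : u ∈ gA u := by
        simp only [hgA]
        rw [dif_pos hu]
        exact (hAv1 u hu).2
      have hle : gA u ⊆ T' := by
        rw [hT'def]
        exact Finset.le_iff_subset.mp (Finset.le_sup (mem_erase.mpr ⟨huv, huS⟩))
      exact hle hmm
    have hbound := kappa_insert_le ends S T' v hvT' hST'
    have h1 : ∑ w ∈ insert v T', x w ≤ (multigraphKappa ends (insert v T') : ℝ) := hxκ _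
    simp only [hTight] at hTT'
    have hcast : (multigraphKappa ends (insert v T') : ℝ)
        ≤ (multigraphKappa ends T' : ℝ) + (dhat ends S v : ℝ) := by exact_mod_cast hbound
    rw [Finset.sum_insert hvT'] at h1
    have hxv : x v ≤ (dhat ends S v : ℝ) := by linarith
    rw [hf v] at hxv
    exact_mod_cast hxv
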